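/- (Proposition 1, backward-forward sweep form / S-HELM) Let A be a complex (N+1)×N matrix each of whose columns sums to zero, partitioned into slack row a₀ᵀ and remaining N×N block Ã with Ã invertible, and let Y_b be an invertible N×N complex matrix; set Y^s = A·Y_b·Aᵀ. Fix n ≥ 1, complex numbers S_i, y^{sh}_i, v_i[n−1], w_i[n−1] for each non-slack node i, and let I ∈ ℂ^N have entries I_i = conj(S_i)·conj(w_i[n−1]) − y^{sh}_i·v_i[n−1]. Then a vector v[n] ∈ ℂ^{N+1} with slack entry v_0[n] = 0 satisfies Σ_{j=0}^{N} y^s_{ij}·v_j[n] = I_i for every non-slack i if and only if its non-slack part ṽ[n] satisfies ṽ[n] = (Y_b·Ãᵀ)⁻¹·I_b with I_b = Ã⁻¹·I; that is, the HELM coefficient equations at step n are solved by a single backward sweep (computing branch currents I_b from the injections I) followed by a single forward sweep (computing ṽ[n] from I_b). -/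

import Mathlib

open Matrix Finset

/-- Proposition 1, backward-forward sweep form / S-HELM: With `A` having
zero column sums, `Ã` and `Y_b` invertible, and `Y^s = A · Y_b · Aᵀ`, a vector `v[n]`
with slack entry `0` satisfies the HELM coefficient equations at step `n ≥ 1` with
right-hand side `I_i = conj(S_i)·conj(w_i[n-1]) - y^{sh}_i·v_i[n-1]` iff its non-slack
part equals `(Y_b · Ãᵀ)⁻¹ · I_b` with `I_b = Ã⁻¹ · I`: a single backward sweep followed
by a single forward sweep. -/
theorem helm_step_solved_by_backward_forward_sweep (N : ℕ)
    (A : Matrix (Fin (N + 1)) (Fin N) ℂ) (Yb : Matrix (Fin N) (Fin N) ℂ)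
    (hcol : ∀ j : Fin N, ∑ i : Fin (N + 1), A i j = 0)
    (hAt : IsUnit (A.submatrix Fin.succ id)) (hYb : IsUnit Yb)
    (Ys : Matrix (Fin (N + 1)) (Fin (N + 1)) ℂ) (hYs : Ys = A * Yb * Aᵀ)
    (n : ℕ) (hn : 1 ≤ n)
    (S ysh : Fin N → ℂ)
    (v : Fin (N + 1) → ℕ → ℂ) (w : Fin N → ℕ → ℂ)
    (I : Fin N → ℂ)
    (hI : ∀ i : Fin N,
      I i = (starRingEnd ℂ) (S i) * (starRingEnd ℂ) (w i (n - 1)) -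
        ysh i * v i.succ (n - 1))
    (hslack : v 0 n = 0) :
    (∀ i : Fin N, ∑ j : Fin (N + 1), Ys i.succ j * v j n = I i) ↔
      (fun i : Fin N => v i.succ n) =
        (Yb * (A.submatrix Fin.succ id)ᵀ)⁻¹ *ᵥ ((A.submatrix Fin.succ id)⁻¹ *ᵥ I) := by
  set At := A.submatrix Fin.succ id with hAtdef
  set B := Yb * Atᵀ with hB
  set M := At * B with hM
  set v' : Fin N → ℂ := fun i => v i.succ n with hv'
  have hAtT : IsUnit Atᵀ := by
    rw [Matrix.isUnit_iff_isUnit_det, Matrix.det_transpose,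
      ← Matrix.isUnit_iff_isUnit_det]
    exact hAt
  have hBunit : IsUnit B := hYb.mul hAtT
  have hMunit : IsUnit M := hAt.mul hBunit
  -- Rewrite LHS sum as a matrix-vector product with M
  have hsum : ∀ i : Fin N, ∑ j : Fin (N + 1), Ys i.succ j * v j n = (M *ᵥ v') i := by
    intro i
    rw [Fin.sum_univ_succ, hslack, mul_zero, zero_add]
    have hentry : ∀ j : Fin N, Ys i.succ j.succ = M i j := by
      intro j
      simp [hYs, hM, hB, hAtdef, Matrix.mul_apply, Matrix.submatrix,
        Matrix.transpose_apply, Finset.mul_sum, Finset.sum_mul, mul_assoc]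
      rw [Finset.sum_comm]
    simp only [hentry, Matrix.mulVec, dotProduct, hv']
  have key : (∀ i : Fin N, (M *ᵥ v') i = I i) ↔ v' = B⁻¹ *ᵥ (At⁻¹ *ᵥ I) := by
    constructor
    · intro h
      have h' : M *ᵥ v' = I := funext h
      have : M⁻¹ *ᵥ (M *ᵥ v') = M⁻¹ *ᵥ I := by rw [h']
      rw [Matrix.mulVec_mulVec, Matrix.nonsing_inv_mul M
        ((Matrix.isUnit_iff_isUnit_det M).mp hMunit), Matrix.one_mulVec] at this
      rw [this, hM, Matrix.mul_inv_rev, ← Matrix.mulVec_mulVec]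
    · intro h
      intro i
      have : M *ᵥ v' = I := by
        rw [h, Matrix.mulVec_mulVec, Matrix.mulVec_mulVec, hM,
          mul_assoc At B B⁻¹, Matrix.mul_nonsing_inv B
          ((Matrix.isUnit_iff_isUnit_det B).mp hBunit), mul_one,
          Matrix.mul_nonsing_inv At
          ((Matrix.isUnit_iff_isUnit_det At).mp hAt), Matrix.one_mulVec]
      rw [this]
  rw [show (∀ i : Fin N, ∑ j : Fin (N + 1), Ys i.succ j * v j n = I i) ↔
      (∀ i : Fin N, (M *ᵥ v') i = I i) from
    forall_congr' fun i => by rw [hsum i]]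
  exact key
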